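/- Let n₁, n₂ ≥ 2 be integers whose prime factorizations have the same multiset of exponents; that is, if n₁ = p₁^{α₁}⋯p_r^{α_r} and n₂ = q₁^{β₁}⋯q_s^{β_s} with distinct primes p_i and distinct primes q_j, then r = s and the multisets {α₁, …, α_r} and {β₁, …, β_s} coincide. Then g⁻¹(n₁) = g⁻¹(n₂). -/

import Mathlib

open Finset

/-- From a `Multiset.Rel` between two nodup multisets, extract a function that is a
bijection between the underlying sets and realizes the relation. -/
lemma rel_exists_fun {α β : Type*} [DecidableEq α] [Nonempty β] {r : α → β → Prop}
    {s : Multiset α} {t : Multiset β} (h : Multiset.Rel r s t) (hs : s.Nodup) (ht : t.Nodup) :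
    ∃ σ : α → β, Set.BijOn σ {a | a ∈ s} {b | b ∈ t} ∧ ∀ a ∈ s, r a (σ a) := by
  induction h with
  | zero =>
      refine ⟨fun _ => Classical.arbitrary β, ?_, by simp⟩
      simp [Set.bijOn_empty]
  | @cons a b s t hab hrel ih =>
      obtain ⟨has, hs'⟩ := Multiset.nodup_cons.mp hs
      obtain ⟨hbt, ht'⟩ := Multiset.nodup_cons.mp ht
      obtain ⟨σ, hbij, hprop⟩ := ih hs' ht'
      refine ⟨Function.update σ a b, ?_, ?_⟩
      · have hset1 : {x | x ∈ a ::ₘ s} = insert a {x | x ∈ s} := by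
          ext x; simp [Multiset.mem_cons]
        have hset2 : {y | y ∈ b ::ₘ t} = insert b {y | y ∈ t} := by
          ext y; simp [Multiset.mem_cons]
        rw [hset1, hset2]
        have heq : Set.EqOn σ (Function.update σ a b) {x | x ∈ s} := by
          intro x hx
          have : x ≠ a := fun hxa => has (hxa ▸ hx)
          simp [Function.update_of_ne this]
        have hbij' : Set.BijOn (Function.update σ a b) {x | x ∈ s} {y | y ∈ t} :=
          hbij.congr heq
        have : Function.update σ a b a = b := Function.update_self a b σ
        have hres := hbij'.insert (a := a) (by rw [this]; exact hbt)
        rwa [this] at hres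
      · intro x hx
        rcases Multiset.mem_cons.mp hx with rfl | hx'
        · simpa using hab
        · have : x ≠ a := fun hxa => has (hxa ▸ hx')
          rw [Function.update_of_ne this]
          exact hprop x hx'

/-- membership in primeFactors via factorization -/
lemma mem_pf_iff (n p : ℕ) : p ∈ n.primeFactors ↔ n.factorization p ≠ 0 := by
  rw [← Nat.support_factorization, Finsupp.mem_support_iff]

section transfer

variable {m₁ m₂ : ℕ} {σ : ℕ → ℕ}

/-- the divisor transfer map -/
noncomputable def Dmap (σ : ℕ → ℕ) (m₁ : ℕ) (d : ℕ) : ℕ :=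
  ∏ p ∈ m₁.primeFactors, σ p ^ d.factorization p

lemma Dmap_pos (hbij : Set.BijOn σ ↑m₁.primeFactors ↑m₂.primeFactors) (d : ℕ) :
    0 < Dmap σ m₁ d := by
  refine Finset.prod_pos fun p hp => ?_
  have hσp : σ p ∈ m₂.primeFactors := hbij.mapsTo hp
  exact pow_pos (Nat.pos_of_mem_primeFactors hσp) _

lemma Dmap_factorization_apply (hbij : Set.BijOn σ ↑m₁.primeFactors ↑m₂.primeFactors)
    (d : ℕ) (q : ℕ) (hq : q ∈ m₁.primeFactors) :
    (Dmap σ m₁ d).factorization (σ q) = d.factorization q := by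
  have hprime : ∀ p ∈ m₁.primeFactors, (σ p).Prime := fun p hp =>
    Nat.prime_of_mem_primeFactors (hbij.mapsTo hp)
  rw [Dmap, Nat.factorization_prod (fun p hp => pow_ne_zero _ (hprime p hp).ne_zero)]
  rw [Finset.sum_apply']
  rw [Finset.sum_eq_single_of_mem q hq]
  · rw [(hprime q hq).factorization_pow, Finsupp.single_eq_same]
  · intro p hp hpq
    rw [(hprime p hp).factorization_pow, Finsupp.single_eq_of_ne]
    exact fun h => hpq (hbij.injOn hp hq h.symm)

lemma Dmap_factorization_zero (hbij : Set.BijOn σ ↑m₁.primeFactors ↑m₂.primeFactors)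
    (d : ℕ) (r : ℕ) (hr : r ∉ m₂.primeFactors) :
    (Dmap σ m₁ d).factorization r = 0 := by
  have hprime : ∀ p ∈ m₁.primeFactors, (σ p).Prime := fun p hp =>
    Nat.prime_of_mem_primeFactors (hbij.mapsTo hp)
  rw [Dmap, Nat.factorization_prod (fun p hp => pow_ne_zero _ (hprime p hp).ne_zero)]
  rw [Finset.sum_apply']
  refine Finset.sum_eq_zero fun p hp => ?_
  rw [(hprime p hp).factorization_pow, Finsupp.single_eq_of_ne]
  exact fun h => hr (h ▸ hbij.mapsTo hp)

lemma Dmap_dvd (hm₁ : m₁ ≠ 0) (hm₂ : m₂ ≠ 0)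
    (hbij : Set.BijOn σ ↑m₁.primeFactors ↑m₂.primeFactors)
    (hfac : ∀ p ∈ m₁.primeFactors, m₂.factorization (σ p) = m₁.factorization p)
    {d : ℕ} (hd : d ∣ m₁) : Dmap σ m₁ d ∣ m₂ := by
  rw [← Nat.factorization_le_iff_dvd (Dmap_pos hbij d).ne' hm₂]
  intro r
  by_cases hr : r ∈ m₂.primeFactors
  · obtain ⟨q, hq, rfl⟩ := hbij.surjOn hr
    rw [Dmap_factorization_apply hbij d q hq, hfac q hq]
    exact (Nat.factorization_le_iff_dvd (Nat.pos_of_dvd_of_pos hd (Nat.pos_of_ne_zero hm₁)).ne'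
      hm₁).mpr hd q
  · rw [Dmap_factorization_zero hbij d r hr]
    exact Nat.zero_le _

/-- prime factor set of `Dmap σ m₁ d` is the image of that of `d`. -/
lemma Dmap_primeFactors (hm₁ : m₁ ≠ 0) (hm₂ : m₂ ≠ 0)
    (hbij : Set.BijOn σ ↑m₁.primeFactors ↑m₂.primeFactors)
    (hfac : ∀ p ∈ m₁.primeFactors, m₂.factorization (σ p) = m₁.factorization p)
    {d : ℕ} (hd : d ∣ m₁) :
    (Dmap σ m₁ d).primeFactors = d.primeFactors.image σ := by
  have hdsub : d.primeFactors ⊆ m₁.primeFactors :=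
    Nat.primeFactors_mono hd hm₁
  ext r
  simp only [Finset.mem_image]
  constructor
  · intro hr
    have hr2 : r ∈ m₂.primeFactors :=
      Nat.primeFactors_mono (Dmap_dvd hm₁ hm₂ hbij hfac hd) hm₂ hr
    obtain ⟨q, hq, rfl⟩ := hbij.surjOn hr2
    refine ⟨q, ?_, rfl⟩
    rw [mem_pf_iff] at hr ⊢
    rwa [Dmap_factorization_apply hbij d q hq] at hr
  · rintro ⟨q, hq, rfl⟩
    rw [mem_pf_iff] at hq ⊢
    rwa [Dmap_factorization_apply hbij d q (hdsub ((mem_pf_iff d q).mpr hq))]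

/-- If the prime factors are in bijection with matching exponents, the exponent multisets agree. -/
lemma mapeq (hbij : Set.BijOn σ ↑m₁.primeFactors ↑m₂.primeFactors)
    (hfac : ∀ p ∈ m₁.primeFactors, m₂.factorization (σ p) = m₁.factorization p) :
    m₁.primeFactors.val.map (fun p => m₁.factorization p) =
      m₂.primeFactors.val.map (fun p => m₂.factorization p) := by
  have himg : m₁.primeFactors.image σ = m₂.primeFactors := by
    apply Finset.coe_injective
    rw [Finset.coe_image]
    exact hbij.image_eq
  have hval : m₂.primeFactors.val = m₁.primeFactors.val.map σ := by
    rw [← himg, Finset.image_val_of_injOn hbij.injOn]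
  rw [hval, Multiset.map_map]
  symm
  apply Multiset.map_congr rfl
  intro p hp
  exact hfac p hp

lemma quot_fact (hm₁ : m₁ ≠ 0) (hm₂ : m₂ ≠ 0)
    (hbij : Set.BijOn σ ↑m₁.primeFactors ↑m₂.primeFactors)
    (hfac : ∀ p ∈ m₁.primeFactors, m₂.factorization (σ p) = m₁.factorization p)
    {d : ℕ} (hd : d ∣ m₁) (q : ℕ) (hq : q ∈ m₁.primeFactors) :
    (m₂ / Dmap σ m₁ d).factorization (σ q) = (m₁ / d).factorization q := by
  rw [Nat.factorization_div (Dmap_dvd hm₁ hm₂ hbij hfac hd), Nat.factorization_div hd,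
    Finsupp.tsub_apply, Finsupp.tsub_apply, hfac q hq,
    Dmap_factorization_apply hbij d q hq]

lemma quot_bij (hm₁ : m₁ ≠ 0) (hm₂ : m₂ ≠ 0)
    (hbij : Set.BijOn σ ↑m₁.primeFactors ↑m₂.primeFactors)
    (hfac : ∀ p ∈ m₁.primeFactors, m₂.factorization (σ p) = m₁.factorization p)
    {d : ℕ} (hd : d ∣ m₁) :
    Set.BijOn σ ↑(m₁ / d).primeFactors ↑(m₂ / Dmap σ m₁ d).primeFactors := by
  have hsub1 : (m₁ / d).primeFactors ⊆ m₁.primeFactors :=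
    Nat.primeFactors_mono (Nat.div_dvd_of_dvd hd) hm₁
  have hsub2 : (m₂ / Dmap σ m₁ d).primeFactors ⊆ m₂.primeFactors :=
    Nat.primeFactors_mono (Nat.div_dvd_of_dvd (Dmap_dvd hm₁ hm₂ hbij hfac hd)) hm₂
  refine ⟨?_, hbij.injOn.mono (by exact_mod_cast hsub1), ?_⟩
  · intro q hq
    have hq1 : q ∈ m₁.primeFactors := hsub1 hq
    have := quot_fact hm₁ hm₂ hbij hfac hd q hq1
    rw [Finset.mem_coe, mem_pf_iff] at hq ⊢
    rwa [this]
  · intro r hr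
    have hr2 : r ∈ m₂.primeFactors := hsub2 hr
    obtain ⟨q, hq, rfl⟩ := hbij.surjOn hr2
    refine ⟨q, ?_, rfl⟩
    have := quot_fact hm₁ hm₂ hbij hfac hd q hq
    rw [Finset.mem_coe, mem_pf_iff] at hr ⊢
    rwa [this] at hr

lemma quot_fac (hm₁ : m₁ ≠ 0) (hm₂ : m₂ ≠ 0)
    (hbij : Set.BijOn σ ↑m₁.primeFactors ↑m₂.primeFactors)
    (hfac : ∀ p ∈ m₁.primeFactors, m₂.factorization (σ p) = m₁.factorization p)
    {d : ℕ} (hd : d ∣ m₁) :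
    ∀ p ∈ (m₁ / d).primeFactors,
      (m₂ / Dmap σ m₁ d).factorization (σ p) = (m₁ / d).factorization p := by
  intro p hp
  exact quot_fact hm₁ hm₂ hbij hfac hd p (Nat.primeFactors_mono (Nat.div_dvd_of_dvd hd) hm₁ hp)

lemma Dmap_ne_one (hm₁ : m₁ ≠ 0) (hm₂ : m₂ ≠ 0)
    (hbij : Set.BijOn σ ↑m₁.primeFactors ↑m₂.primeFactors)
    (hfac : ∀ p ∈ m₁.primeFactors, m₂.factorization (σ p) = m₁.factorization p)
    {d : ℕ} (hd : d ∣ m₁) (hd1 : d ≠ 1) : Dmap σ m₁ d ≠ 1 := by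
  intro hone
  have hd0 : d ≠ 0 := fun h => hm₁ (zero_dvd_iff.mp (h ▸ hd))
  apply hd1
  refine Nat.eq_of_factorization_eq hd0 one_ne_zero fun p => ?_
  rw [Nat.factorization_one, Finsupp.coe_zero, Pi.zero_apply]
  by_cases hp : p ∈ m₁.primeFactors
  · have := Dmap_factorization_apply hbij d p hp
    rw [hone] at this
    simpa using this.symm
  · have : p ∉ d.primeFactors := fun h => hp (Nat.primeFactors_mono hd hm₁ h)
    rwa [mem_pf_iff, not_not] at this

lemma Dmap_roundtrip {τ : ℕ → ℕ} (hm₁ : m₁ ≠ 0) (hm₂ : m₂ ≠ 0)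
    (hbij : Set.BijOn σ ↑m₁.primeFactors ↑m₂.primeFactors)
    (hfac : ∀ p ∈ m₁.primeFactors, m₂.factorization (σ p) = m₁.factorization p)
    (τbij : Set.BijOn τ ↑m₂.primeFactors ↑m₁.primeFactors)
    (hleft : ∀ p ∈ m₁.primeFactors, τ (σ p) = p)
    {d : ℕ} (hd : d ∣ m₁) (hd0 : d ≠ 0) :
    Dmap τ m₂ (Dmap σ m₁ d) = d := by
  refine Nat.eq_of_factorization_eq (Dmap_pos τbij _).ne' hd0 fun p => ?_
  by_cases hp : p ∈ m₁.primeFactors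
  · have h1 : σ p ∈ m₂.primeFactors := hbij.mapsTo hp
    calc (Dmap τ m₂ (Dmap σ m₁ d)).factorization p
        = (Dmap τ m₂ (Dmap σ m₁ d)).factorization (τ (σ p)) := by rw [hleft p hp]
      _ = (Dmap σ m₁ d).factorization (σ p) := Dmap_factorization_apply τbij _ (σ p) h1
      _ = d.factorization p := Dmap_factorization_apply hbij d p hp
  · rw [Dmap_factorization_zero τbij _ p hp]
    have : p ∉ d.primeFactors := fun h => hp (Nat.primeFactors_mono hd hm₁ h)
    rw [mem_pf_iff, not_not] at this
    exact this.symm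

end transfer

theorem stmt_11 (g ginv : ArithmeticFunction ℝ)
    (hg : ∀ n : ℕ, 0 < n → g n = (ArithmeticFunction.cardDistinctFactors n : ℝ) + 1)
    (hginv : g * ginv = 1) (n₁ n₂ : ℕ) (h1 : 2 ≤ n₁) (h2 : 2 ≤ n₂)
    (hexp : n₁.primeFactors.val.map (fun p => n₁.factorization p) =
            n₂.primeFactors.val.map (fun p => n₂.factorization p)) :
    ginv n₁ = ginv n₂ := by
  -- ω as card of primeFactors
  have homega : ∀ n : ℕ, (ArithmeticFunction.cardDistinctFactors n : ℕ) = n.primeFactors.card := by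
    intro n
    rw [ArithmeticFunction.cardDistinctFactors_apply, Nat.primeFactors, List.card_toFinset]
  have hg1 : g 1 = 1 := by
    rw [hg 1 one_pos]; simp
  -- recursion formula
  have hrec : ∀ n : ℕ, 1 < n →
      ginv n = -∑ d ∈ (n.divisors).erase 1, g d * ginv (n / d) := by
    intro n hn
    have hn0 : n ≠ 0 := by omega
    have h0 : (g * ginv) n = 0 := by
      rw [hginv, ArithmeticFunction.one_apply]
      simp [Nat.ne_of_gt hn]
    rw [ArithmeticFunction.mul_apply] at h0
    rw [Nat.sum_divisorsAntidiagonal (f := fun d e => g d * ginv e)] at h0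
    have h1mem : (1 : ℕ) ∈ n.divisors := Nat.one_mem_divisors.mpr hn0
    rw [← Finset.add_sum_erase _ _ h1mem] at h0
    simp only [Nat.div_one, hg1, one_mul] at h0
    linarith
  -- main induction
  have key : ∀ N : ℕ, ∀ m₁ m₂ : ℕ, m₁ ≤ N → 0 < m₁ → 0 < m₂ →
      m₁.primeFactors.val.map (fun p => m₁.factorization p) =
        m₂.primeFactors.val.map (fun p => m₂.factorization p) →
      ginv m₁ = ginv m₂ := by
    intro N
    induction N with
    | zero => intro m₁ m₂ hle hm₁ _ _; omega
    | succ N IH =>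
      intro m₁ m₂ hle hm₁ hm₂ hmap
      -- reduce to the case both > 1
      have hone : ∀ a b : ℕ, 0 < b → a = 1 →
          a.primeFactors.val.map (fun p => a.factorization p) =
            b.primeFactors.val.map (fun p => b.factorization p) → b = 1 := by
        intro a b hb ha h
        subst ha
        have h0 : b.primeFactors.val.map (fun p => b.factorization p) = 0 := by
          rw [← h]; simp
        have h2 : b.primeFactors.val = 0 := by
          simpa using (Multiset.map_eq_zero.mp h0)
        have h3 : b.primeFactors = ∅ := Finset.val_eq_zero.mp h2
        rcases Nat.primeFactors_eq_empty.mp h3 with h | h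
        · omega
        · exact h
      by_cases hm₁1 : m₁ = 1
      · have : m₂ = 1 := hone m₁ m₂ hm₂ hm₁1 hmap
        rw [hm₁1, this]
      · have hm₂1 : m₂ ≠ 1 := by
          intro h
          exact hm₁1 (hone m₂ m₁ hm₁ h hmap.symm)
        have hm₁gt : 1 < m₁ := by omega
        have hm₂gt : 1 < m₂ := by omega
        have hm₁0 : m₁ ≠ 0 := by omega
        have hm₂0 : m₂ ≠ 0 := by omega
        -- extract the bijection σ
        have hrel : Multiset.Rel (fun p q => m₁.factorization p = m₂.factorization q)
            m₁.primeFactors.val m₂.primeFactors.val := by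
          have := Multiset.rel_eq.mpr hmap
          rwa [Multiset.rel_map] at this
        obtain ⟨σ, hbij0, hfac0⟩ := rel_exists_fun hrel m₁.primeFactors.nodup
          m₂.primeFactors.nodup
        have hsetcoe : ∀ (s : Finset ℕ), {a | a ∈ s.val} = (↑s : Set ℕ) := by
          intro s; ext x; simp [Finset.mem_coe]
        have hbij : Set.BijOn σ ↑m₁.primeFactors ↑m₂.primeFactors := by
          rw [← hsetcoe, ← hsetcoe]; exact hbij0
        have hfac : ∀ p ∈ m₁.primeFactors, m₂.factorization (σ p) = m₁.factorization p :=
          fun p hp => (hfac0 p hp).symm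
        -- the inverse map τ
        set τ := Function.invFunOn σ ↑m₁.primeFactors with hτ
        have hinv : Set.InvOn τ σ ↑m₁.primeFactors ↑m₂.primeFactors :=
          hbij.invOn_invFunOn
        have τbij : Set.BijOn τ ↑m₂.primeFactors ↑m₁.primeFactors :=
          Set.BijOn.symm hinv.symm hbij
        have τfac : ∀ q ∈ m₂.primeFactors, m₁.factorization (τ q) = m₂.factorization q := by
          intro q hq
          have h1 : τ q ∈ m₁.primeFactors := τbij.mapsTo hq
          have h2 : σ (τ q) = q := hinv.2 hq
          rw [← h2, hfac (τ q) h1, h2]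
        have hleft : ∀ p ∈ m₁.primeFactors, τ (σ p) = p := fun p hp => hinv.1 hp
        have hright : ∀ q ∈ m₂.primeFactors, σ (τ q) = q := fun q hq => hinv.2 hq
        -- recursion and sum transfer
        rw [hrec m₁ hm₁gt, hrec m₂ hm₂gt]
        congr 1
        refine Finset.sum_nbij' (Dmap σ m₁) (Dmap τ m₂) ?_ ?_ ?_ ?_ ?_
        · intro d hd
          obtain ⟨hd1, hdm⟩ := Finset.mem_erase.mp hd
          have hdvd : d ∣ m₁ := Nat.dvd_of_mem_divisors hdm
          exact Finset.mem_erase.mpr ⟨Dmap_ne_one hm₁0 hm₂0 hbij hfac hdvd hd1,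
            Nat.mem_divisors.mpr ⟨Dmap_dvd hm₁0 hm₂0 hbij hfac hdvd, hm₂0⟩⟩
        · intro e he
          obtain ⟨he1, hem⟩ := Finset.mem_erase.mp he
          have hedvd : e ∣ m₂ := Nat.dvd_of_mem_divisors hem
          exact Finset.mem_erase.mpr ⟨Dmap_ne_one hm₂0 hm₁0 τbij τfac hedvd he1,
            Nat.mem_divisors.mpr ⟨Dmap_dvd hm₂0 hm₁0 τbij τfac hedvd, hm₁0⟩⟩
        · intro d hd
          obtain ⟨hd1, hdm⟩ := Finset.mem_erase.mp hd
          have hdvd : d ∣ m₁ := Nat.dvd_of_mem_divisors hdm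
          have hd0 : d ≠ 0 := (Nat.pos_of_mem_divisors hdm).ne'
          exact Dmap_roundtrip hm₁0 hm₂0 hbij hfac τbij hleft hdvd hd0
        · intro e he
          obtain ⟨he1, hem⟩ := Finset.mem_erase.mp he
          have hedvd : e ∣ m₂ := Nat.dvd_of_mem_divisors hem
          have he0 : e ≠ 0 := (Nat.pos_of_mem_divisors hem).ne'
          exact Dmap_roundtrip hm₂0 hm₁0 τbij τfac hbij hright hedvd he0
        · intro d hd
          obtain ⟨hd1, hdm⟩ := Finset.mem_erase.mp hd
          have hdvd : d ∣ m₁ := Nat.dvd_of_mem_divisors hdm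
          have hd0 : d ≠ 0 := (Nat.pos_of_mem_divisors hdm).ne'
          have hDpos : 0 < Dmap σ m₁ d := Dmap_pos hbij d
          -- g values agree
          have hgeq : g d = g (Dmap σ m₁ d) := by
            rw [hg d (Nat.pos_of_ne_zero hd0), hg _ hDpos]
            congr 2
            rw [homega, homega, Dmap_primeFactors hm₁0 hm₂0 hbij hfac hdvd,
              Finset.card_image_of_injOn]
            exact hbij.injOn.mono (by exact_mod_cast Nat.primeFactors_mono hdvd hm₁0)
          -- ginv values agree via IH
          have hq1 : 0 < m₁ / d := Nat.div_pos (Nat.le_of_dvd (Nat.pos_of_ne_zero hm₁0) hdvd)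
            (Nat.pos_of_ne_zero hd0)
          have hq2 : 0 < m₂ / Dmap σ m₁ d :=
            Nat.div_pos (Nat.le_of_dvd (Nat.pos_of_ne_zero hm₂0)
              (Dmap_dvd hm₁0 hm₂0 hbij hfac hdvd)) hDpos
          have hlt : m₁ / d < m₁ := Nat.div_lt_self (Nat.pos_of_ne_zero hm₁0)
            (by omega : 1 < d)
          have hle' : m₁ / d ≤ N := by omega
          have hgi : ginv (m₁ / d) = ginv (m₂ / Dmap σ m₁ d) := by
            refine IH _ _ hle' hq1 hq2 ?_
            exact mapeq (quot_bij hm₁0 hm₂0 hbij hfac hdvd)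
              (quot_fac hm₁0 hm₂0 hbij hfac hdvd)
          rw [hgeq, hgi]
  exact key n₁ n₁ n₂ le_rfl (by omega) (by omega) hexp
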